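/- Let x and y be strings of length k such that ssp_x[1..k−1] = ssp_y[1..k−1]. Then ssp_x[k] = ssp_y[k] if and only if sspg_x[k] = sspg_y[k]; and ssp_x[k] < ssp_y[k] if and only if sspg_x[k] < sspg_y[k] (where ∞ is greater than every natural number). -/

import Mathlib

open scoped ENat

variable {α : Type*}

/-- `w` is a palindrome. -/
def IsPal (w : List α) : Prop := w.reverse = w

/-- The substring `w[i..j]`, 1-indexed, inclusive; empty if `i > j`. -/
def sub (w : List α) (i j : ℕ) : List α := (w.take j).drop (i - 1)

/-- Two strings of the same length pal-match: they agree on which substrings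
`w[i..j]` (for `1 ≤ i < j ≤ |w|`) are palindromes. -/
def PalMatch (x y : List α) : Prop :=
  x.length = y.length ∧
    ∀ i j, 1 ≤ i → i < j → j ≤ x.length → (IsPal (sub x i j) ↔ IsPal (sub y i j))

/-- `sspAt w i` : length of the shortest palindromic suffix of `w[1..i]`
of length at least 2, or `∞` if none exists. -/
noncomputable def sspAt (w : List α) (i : ℕ) : ℕ∞ :=
  sInf {ℓ : ℕ∞ | ∃ u : List α, u <:+ w.take i ∧ IsPal u ∧ 2 ≤ u.length ∧ (u.length : ℕ∞) = ℓ}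

/-- The ssp-encoding of `w` as a sequence of length `|w|` over `ℕ ∪ {∞}`. -/
noncomputable def ssp (w : List α) : List ℕ∞ :=
  (List.range w.length).map fun k => sspAt w (k + 1)

/-- The palindromic proper suffixes of `w` (including the empty suffix). -/
def palSufs (w : List α) : Set (List α) :=
  {u | u <:+ w ∧ IsPal u ∧ u.length < w.length}

/-- The suffix-pal-groups of `w`, identified with the character `w[|w|-|u|]`
immediately to the left of their members. -/
def palSufGroups (w : List α) : Set (Option α) :=
  {c | ∃ u ∈ palSufs w, w[w.length - u.length - 1]? = c}

/-- Length of the representative (shortest member) of the suffix-pal-group of `w`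
whose members have the character `c` immediately to their left. -/
noncomputable def repLen (w : List α) (c : Option α) : ℕ :=
  sInf {ℓ : ℕ | ∃ u ∈ palSufs w, w[w.length - u.length - 1]? = c ∧ u.length = ℓ}

/-- The 1-based identifier of the suffix-pal-group of `w` with left character `c`:
identifiers are assigned in increasing order of the representatives' lengths. -/
noncomputable def groupIdOf (w : List α) (c : Option α) : ℕ :=
  Set.ncard {c' | c' ∈ palSufGroups w ∧ repLen w c' ≤ repLen w c}

/-- `sspgAt w i` : `∞` if `sspAt w i = ∞`, and otherwise the identifier of the
suffix-pal-group of `w[1..i-1]` containing the palindromic suffix of `w[1..i-1]`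
of length `sspAt w i - 2`. -/
noncomputable def sspgAt (w : List α) (i : ℕ) : ℕ∞ :=
  if sspAt w i = ⊤ then ⊤
  else (groupIdOf (w.take (i - 1))
        ((w.take (i - 1))[(i - 1) - ((sspAt w i).toNat - 2) - 1]?) : ℕ∞)

/-- `π(w) = sspg_{reverse w}[|w|]`. -/
noncomputable def piEnc (w : List α) : ℕ∞ := sspgAt w.reverse w.length

namespace Aux

theorem isPal_nil : IsPal ([] : List α) := rfl
theorem isPal_singleton (a : α) : IsPal [a] := rfl

theorem isPal_cons_concat {m : List α} (hm : IsPal m) (c : α) : IsPal (c :: m ++ [c]) := by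
  simp [IsPal] at hm ⊢; simp [hm]

theorem isPal_cons_concat_iff {m : List α} (hm : IsPal m) (a b : α) :
    IsPal (a :: m ++ [b]) ↔ a = b := by
  constructor
  · intro h
    have := congrArg List.head? h
    simpa [IsPal] using this.symm
  · rintro rfl; exact isPal_cons_concat hm a

theorem isPal_decomp {u : List α} (hu : IsPal u) (h2 : 2 ≤ u.length) :
    ∃ a m, u = a :: m ++ [a] ∧ IsPal m := by
  obtain ⟨a, t, rfl⟩ : ∃ a t, u = a :: t := by
    cases u with
    | nil => simp at h2
    | cons a t => exact ⟨a, t, rfl⟩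
  obtain ⟨m, b, rfl⟩ : ∃ m b, t = m ++ [b] := by
    rcases t.eq_nil_or_concat with h | ⟨m, b, h⟩
    · subst h; simp at h2
    · exact ⟨m, b, by simpa using h⟩
  have hrev : b :: m.reverse ++ [a] = a :: m ++ [b] := by
    simpa [IsPal] using hu
  have hb : b = a := by simpa using congrArg List.head? hrev
  subst hb
  have hm : IsPal m := by
    have h1 : b :: (m.reverse ++ [b]) = b :: (m ++ [b]) := by simpa using hrev
    have h2 : m.reverse ++ [b] = m ++ [b] := by injection h1
    exact List.append_cancel_right h2
  exact ⟨b, m, rfl, hm⟩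

/-- a pal suffix of a pal is a prefix -/
theorem pal_suffix_prefix {u v : List α} (hu : IsPal u) (hv : IsPal v) (h : v <:+ u) :
    v <+: u := by
  have h2 := h.reverse
  rwa [hu, hv] at h2

theorem suffix_trans_le {l₁ l₂ w : List α} (h1 : l₁ <:+ w) (h2 : l₂ <:+ w)
    (h : l₁.length ≤ l₂.length) : l₁ <:+ l₂ :=
  List.suffix_of_suffix_length_le h1 h2 h

theorem suffix_eq_of_length_eq {l₁ l₂ w : List α} (h1 : l₁ <:+ w) (h2 : l₂ <:+ w)
    (h : l₁.length = l₂.length) : l₁ = l₂ :=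
  (suffix_trans_le h1 h2 h.le).eq_of_length h

/-- has a palindromic suffix of length ℓ -/
def PS (w : List α) (ℓ : ℕ) : Prop := ∃ u, u <:+ w ∧ IsPal u ∧ u.length = ℓ

theorem PS.le_length {w : List α} {ℓ : ℕ} (h : PS w ℓ) : ℓ ≤ w.length := by
  obtain ⟨u, hu, _, rfl⟩ := h; exact hu.length_le

theorem PS_zero (w : List α) : PS w 0 := ⟨[], List.nil_suffix, isPal_nil, rfl⟩

theorem PS_one {w : List α} (h : 1 ≤ w.length) : PS w 1 := by
  obtain ⟨m, b, rfl⟩ : ∃ m b, w = m ++ [b] := by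
    rcases w.eq_nil_or_concat with h' | ⟨m, b, h'⟩
    · subst h'; simp at h
    · exact ⟨m, b, by simpa using h'⟩
  exact ⟨[b], ⟨m, rfl⟩, isPal_singleton b, rfl⟩

theorem PS_of_le_one {w : List α} {ℓ : ℕ} (hl : ℓ ≤ 1) (h : ℓ ≤ w.length) : PS w ℓ := by
  interval_cases ℓ
  · exact PS_zero w
  · exact PS_one h

/-- the unique suffix of length ℓ is a pal -/
theorem PS_iff_of_suffix {w u : List α} {ℓ : ℕ} (hu : u <:+ w) (hl : u.length = ℓ) :
    PS w ℓ ↔ IsPal u := by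
  constructor
  · rintro ⟨v, hv, hvp, hvl⟩
    rwa [suffix_eq_of_length_eq hu hv (by omega)]
  · intro h; exact ⟨u, hu, h, hl⟩

theorem sspAt_set_eq (w : List α) (i : ℕ) :
    {ℓ : ℕ∞ | ∃ u : List α, u <:+ w.take i ∧ IsPal u ∧ 2 ≤ u.length ∧ (u.length : ℕ∞) = ℓ}
      = (fun n : ℕ => (n : ℕ∞)) '' {n : ℕ | 2 ≤ n ∧ PS (w.take i) n} := by
  ext ℓ
  constructor
  · rintro ⟨u, hu, hp, h2, rfl⟩
    exact ⟨u.length, ⟨h2, u, hu, hp, rfl⟩, rfl⟩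
  · rintro ⟨n, ⟨h2, u, hu, hp, rfl⟩, rfl⟩
    exact ⟨u, hu, hp, h2, rfl⟩

theorem sspAt_eq_top_iff {w : List α} {i : ℕ} :
    sspAt w i = ⊤ ↔ ∀ n : ℕ, 2 ≤ n → ¬ PS (w.take i) n := by
  rw [sspAt, sspAt_set_eq]
  constructor
  · intro h n h2 hps
    have hle : sInf ((fun n : ℕ => (n : ℕ∞)) '' {n : ℕ | 2 ≤ n ∧ PS (w.take i) n}) ≤ (n : ℕ∞) :=
      sInf_le ⟨n, ⟨h2, hps⟩, rfl⟩
    rw [h] at hle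
    exact (ENat.coe_ne_top n) (top_le_iff.mp hle)
  · intro h
    rw [sInf_eq_top]
    rintro ℓ ⟨n, ⟨h2, hps⟩, rfl⟩
    exact absurd hps (h n h2)

theorem sspAt_spec {w : List α} {i : ℕ} (h : sspAt w i ≠ ⊤) :
    ∃ s : ℕ, sspAt w i = (s : ℕ∞) ∧ 2 ≤ s ∧ PS (w.take i) s ∧
      ∀ n : ℕ, 2 ≤ n → PS (w.take i) n → s ≤ n := by
  have hne : {ℓ : ℕ∞ | ∃ u : List α, u <:+ w.take i ∧ IsPal u ∧ 2 ≤ u.length ∧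
      (u.length : ℕ∞) = ℓ}.Nonempty := by
    by_contra hemp
    rw [Set.not_nonempty_iff_eq_empty] at hemp
    exact h (by rw [sspAt, hemp, sInf_empty])
  have hmem := csInf_mem hne
  rw [sspAt_set_eq] at hmem
  obtain ⟨s, ⟨h2, hps⟩, hs⟩ := hmem
  refine ⟨s, by rw [sspAt, sspAt_set_eq, ← hs], h2, hps, ?_⟩
  intro n hn2 hn
  have hle : sInf ((fun n : ℕ => (n : ℕ∞)) '' {n : ℕ | 2 ≤ n ∧ PS (w.take i) n}) ≤ (n : ℕ∞) :=
    sInf_le (Set.mem_image_of_mem _ ⟨hn2, hn⟩)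
  rw [← hs] at hle
  simpa using hle

theorem sspAt_le {w : List α} {i n : ℕ} (h2 : 2 ≤ n) (h : PS (w.take i) n) :
    sspAt w i ≤ (n : ℕ∞) := by
  rw [sspAt, sspAt_set_eq]
  exact sInf_le (Set.mem_image_of_mem _ ⟨h2, h⟩)


theorem take_eq_of_append {w A B : List α} (h : w = A ++ B) : w.take A.length = A := by
  subst h; exact List.take_left

theorem dropLast_take {w : List α} {i : ℕ} (hi : i ≤ w.length) :
    (w.take i).dropLast = w.take (i - 1) := by
  rw [List.dropLast_eq_take, List.take_take]
  congr 1
  simp only [List.length_take]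
  omega

theorem master {w : List α} {i ℓ : ℕ} (hi : i ≤ w.length) (hℓ : 2 ≤ ℓ) :
    PS (w.take i) ℓ ↔
      ∃ s : ℕ, sspAt w i = (s : ℕ∞) ∧ s ≤ ℓ ∧ ℓ ≤ i ∧ PS (w.take (i - 1)) (ℓ - 2) ∧
        (ℓ = s ∨ (s < ℓ ∧ PS (w.take (i - ℓ + s)) s)) := by
  have hlt : (w.take i).length = i := by simp [List.length_take]; omega
  constructor
  · rintro ⟨u, hu, hup, hul⟩
    have hℓi : ℓ ≤ i := by have := hu.length_le; omega
    have htop : sspAt w i ≠ ⊤ := by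
      intro h
      exact sspAt_eq_top_iff.mp h ℓ hℓ ⟨u, hu, hup, hul⟩
    obtain ⟨s, hs, hs2, hPSs, hmin⟩ := sspAt_spec htop
    have hsl : s ≤ ℓ := hmin ℓ hℓ ⟨u, hu, hup, hul⟩
    obtain ⟨a, m, rfl, hmp⟩ := isPal_decomp hup (by omega)
    have hml : m.length = ℓ - 2 := by simp at hul; omega
    obtain ⟨p, hp⟩ := hu
    refine ⟨s, hs, hsl, hℓi, ?_, ?_⟩
    · -- m <:+ w.take (i-1)
      have hdl : (w.take i).dropLast = p ++ (a :: m) := by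
        rw [← hp]
        rw [show p ++ (a :: m ++ [a]) = (p ++ (a :: m)) ++ [a] by simp]
        exact List.dropLast_concat ..
      refine ⟨m, ?_, hmp, hml⟩
      rw [← dropLast_take hi, hdl]
      exact ⟨p ++ [a], by simp⟩
    · by_cases he : ℓ = s
      · exact Or.inl he
      · have hslt : s < ℓ := lt_of_le_of_ne hsl (fun h => he h.symm)
        obtain ⟨v, hv, hvp, hvl⟩ := hPSs
        have hvu : v <:+ (a :: m ++ [a]) :=
          suffix_trans_le hv ⟨p, hp⟩ (by simp at hul ⊢; omega)
        obtain ⟨z, hz⟩ := pal_suffix_prefix hup hvp hvu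
        refine Or.inr ⟨hslt, v, ?_, hvp, hvl⟩
        have hpv : w.take (i - ℓ + s) = p ++ v := by
          have h1 : w.take i = (p ++ v) ++ z := by rw [← hp, ← hz]; simp
          have hpl : p.length = i - ℓ := by
            have h2 := congrArg List.length hp
            simp at h2 hul
            omega
          have hlen : (p ++ v).length = i - ℓ + s := by simp [hpl, hvl]
          have h2 : (w.take i).take (i - ℓ + s) = p ++ v := by
            rw [← hlen]; exact take_eq_of_append h1
          rw [← h2, List.take_take]
          congr 1
          omega
        rw [hpv]
        exact ⟨p, rfl⟩
  · rintro ⟨s, hs, hsl, hℓi, ⟨m, hm, hmp, hml⟩, hcase⟩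
    have htop : sspAt w i ≠ ⊤ := by rw [hs]; exact ENat.coe_ne_top s
    obtain ⟨s', hs', hs2', hPSs, hmin⟩ := sspAt_spec htop
    have hss : s' = s := by rw [hs] at hs'; exact_mod_cast hs'.symm
    rw [hss] at hs2' hPSs hmin
    clear hs' hss
    rcases hcase with rfl | ⟨hslt, v', hv', hvp', hvl'⟩
    · exact hPSs
    · obtain ⟨v, hv, hvp, hvl⟩ := hPSs
      obtain ⟨c, v₀, hveq, hv₀p⟩ := isPal_decomp hvp (by omega)
      have hv₀l : v₀.length = s - 2 := by
        have := congrArg List.length hveq; simp at this; omega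
      obtain ⟨r, hr⟩ := hv
      rw [hveq] at hr
      -- t.dropLast = r ++ c :: v₀
      have hdl : (w.take i).dropLast = r ++ (c :: v₀) := by
        rw [← hr]
        rw [show r ++ (c :: v₀ ++ [c]) = (r ++ (c :: v₀)) ++ [c] by simp]
        exact List.dropLast_concat ..
      have hdlw : (w.take i).dropLast = w.take (i - 1) := dropLast_take hi
      -- c :: v₀ <:+ m
      have hcv : (c :: v₀) <:+ m := by
        refine suffix_trans_le ?_ (hdlw ▸ hm) (by simp [hv₀l]; omega)
        rw [hdl]; exact ⟨r, rfl⟩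
      obtain ⟨m', hm'⟩ := hcv
      -- m = v₀ ++ [c] ++ m'.reverse
      have hmeq : m = (v₀ ++ [c]) ++ m'.reverse := by
        conv_lhs => rw [← hmp, ← hm']
        simp only [IsPal] at hv₀p
        simp [hv₀p]
      obtain ⟨q', hq'⟩ := hm
      have hq'l : q'.length = i - ℓ + 1 := by
        have h1 := congrArg List.length hq'
        simp [List.length_take] at h1
        omega
      -- w.take (i - ℓ + s) = q' ++ (v₀ ++ [c])
      have hA : w.take (i - ℓ + s) = q' ++ (v₀ ++ [c]) := by
        have h1 : w.take (i - 1) = (q' ++ (v₀ ++ [c])) ++ m'.reverse := by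
          rw [← hq', hmeq]; simp
        have hlen : (q' ++ (v₀ ++ [c])).length = i - ℓ + s := by
          simp [hq'l, hv₀l]; omega
        have h2 : (w.take (i - 1)).take (i - ℓ + s) = q' ++ (v₀ ++ [c]) := by
          rw [← hlen]; exact take_eq_of_append h1
        rw [← h2, List.take_take]
        congr 1
        omega
      -- v' = e :: v₀ ++ [c] with q' = q'' ++ [e]
      obtain ⟨q'', e, hq''⟩ : ∃ q'' e, q' = q'' ++ [e] := by
        rcases q'.eq_nil_or_concat with h' | ⟨q'', e, h'⟩
        · exfalso; rw [h'] at hq'l; simp at hq'l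
        · exact ⟨q'', e, by simpa using h'⟩
      have hsufA : (e :: (v₀ ++ [c])) <:+ w.take (i - ℓ + s) := by
        rw [hA, hq'']; exact ⟨q'', by simp⟩
      have hveq' : v' = e :: (v₀ ++ [c]) := by
        refine suffix_eq_of_length_eq hv' hsufA ?_
        simp [hvl', hv₀l]
        omega
      have hec : e = c := by
        rw [hveq'] at hvp'
        exact (isPal_cons_concat_iff hv₀p e c).mp (by simpa using hvp')
      -- conclude
      have hcm : (c :: m) <:+ w.take (i - 1) := by
        rw [← hq', hq'', hec]; exact ⟨q'', by simp⟩
      obtain ⟨p₂, hp₂⟩ := hcm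
      have hlast : w.take i = w.take (i - 1) ++ [c] := by
        rw [← hdlw, hdl, ← hr]
        simp
      refine ⟨c :: m ++ [c], ?_, isPal_cons_concat hmp c, by simp; omega⟩
      rw [hlast, ← hp₂]
      exact ⟨p₂, by simp⟩

theorem palmatch {x y : List α} {n : ℕ} (hxn : n ≤ x.length) (hyn : n ≤ y.length)
    (hssp : ∀ i, 1 ≤ i → i ≤ n → sspAt x i = sspAt y i) :
    ∀ i, i ≤ n → ∀ ℓ, (PS (x.take i) ℓ ↔ PS (y.take i) ℓ) := by
  intro i
  induction i using Nat.strong_induction_on with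
  | _ i IH =>
    intro hin ℓ
    have hxi : (x.take i).length = i := by simp; omega
    have hyi : (y.take i).length = i := by simp; omega
    rcases le_or_gt ℓ 1 with hl1 | hl2
    · constructor
      · intro h; exact PS_of_le_one hl1 (by rw [hyi]; exact hxi ▸ h.le_length)
      · intro h; exact PS_of_le_one hl1 (by rw [hxi]; exact hyi ▸ h.le_length)
    · rcases Nat.eq_zero_or_pos i with rfl | hi1
      · constructor
        · intro h; have := h.le_length; simp at this; omega
        · intro h; have := h.le_length; simp at this; omega
      · rw [master (by omega) hl2, master (by omega) hl2,
          hssp i hi1 hin]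
        constructor <;>
        · rintro ⟨s, hs, hsl, hli, hprev, hcase⟩
          refine ⟨s, hs, hsl, hli, ?_, ?_⟩
          · have := IH (i-1) (by omega) (by omega) (ℓ - 2)
            tauto
          · rcases hcase with rfl | ⟨hslt, hps⟩
            · exact Or.inl rfl
            · refine Or.inr ⟨hslt, ?_⟩
              have := IH (i - ℓ + s) (by omega) (by omega) s
              tauto

/-- the character immediately to the left of a proper suffix. -/
theorem leftchar_of_suffix {m w' : List α} (q : List α) (e : α) (h : w' = q ++ e :: m) :
    w'[w'.length - m.length - 1]? = some e := by
  subst h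
  have hl : (q ++ e :: m).length - m.length - 1 = q.length := by simp; omega
  rw [hl, List.getElem?_append_right (le_refl _)]
  simp

theorem exists_leftchar {m w' : List α} (h : m <:+ w') (hlt : m.length < w'.length) :
    ∃ q e, w' = q ++ e :: m ∧ w'[w'.length - m.length - 1]? = some e := by
  obtain ⟨p, hp⟩ := h
  obtain ⟨q, e, rfl⟩ : ∃ q e, p = q ++ [e] := by
    rcases p.eq_nil_or_concat with rfl | ⟨q, e, h'⟩
    · exfalso; rw [← hp] at hlt; simp at hlt
    · exact ⟨q, e, by simpa using h'⟩
  refine ⟨q, e, by rw [← hp]; simp, leftchar_of_suffix q e (by rw [← hp]; simp)⟩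

theorem suffix_of_leftchar {m w' : List α} {e : α} (h : m <:+ w') (hlt : m.length < w'.length)
    (he : w'[w'.length - m.length - 1]? = some e) : (e :: m) <:+ w' := by
  obtain ⟨q, e', hq, he'⟩ := exists_leftchar h hlt
  rw [he'] at he
  obtain rfl : e' = e := by injection he
  exact ⟨q, hq.symm⟩

/-- the mirror lemma: same left character iff a small palindrome occurs. -/
theorem leftchar_eq_iff {w' m m₀ : List α} (hm : m <:+ w') (hp : IsPal m)
    (hm₀ : m₀ <:+ w') (hp₀ : IsPal m₀) (hlen : m₀.length < m.length)
    (hlt : m.length < w'.length) :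
    w'[w'.length - m.length - 1]? = w'[w'.length - m₀.length - 1]? ↔
      PS (w'.take (w'.length - m.length + m₀.length + 1)) (m₀.length + 2) := by
  obtain ⟨q, e, hqe, hge⟩ := exists_leftchar hm hlt
  obtain ⟨q₂, e₀, hqe₀, hge₀⟩ := exists_leftchar hm₀ (by omega)
  -- m₀ is a prefix of m
  have hm₀m : m₀ <:+ m := suffix_trans_le hm₀ hm hlen.le
  obtain ⟨z, hz⟩ := pal_suffix_prefix hp hp₀ hm₀m
  -- e₀ :: m₀ is a suffix of m
  have hem : (e₀ :: m₀) <:+ m :=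
    suffix_trans_le ⟨q₂, hqe₀.symm⟩ hm (by simp; omega)
  obtain ⟨m'', hm''⟩ := hem
  -- z = e₀ :: m''.reverse
  have hp₀' : m₀.reverse = m₀ := hp₀
  have hzrev : z.reverse = m'' ++ [e₀] := by
    have h1 : m.reverse = z.reverse ++ m₀ := by
      rw [← hz]; simp [hp₀']
    rw [hp] at h1
    have h2 : z.reverse ++ m₀ = (m'' ++ [e₀]) ++ m₀ := by
      rw [← h1, ← hm'']; simp
    exact List.append_cancel_right h2
  have hzeq : z = e₀ :: m''.reverse := by
    have := congrArg List.reverse hzrev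
    simpa using this
  -- w' = q ++ [e] ++ m₀ ++ [e₀] ++ m''.reverse
  have hw' : w' = (q ++ e :: m₀ ++ [e₀]) ++ m''.reverse := by
    rw [hqe, ← hz, hzeq]; simp
  set N := w'.length - m.length + m₀.length + 1 with hN
  have hql : q.length = w'.length - m.length - 1 := by
    have := congrArg List.length hqe; simp at this; omega
  have htake : w'.take N = q ++ e :: m₀ ++ [e₀] := by
    have hlenA : (q ++ e :: m₀ ++ [e₀]).length = N := by simp [hql, hN]; omega
    rw [← hlenA]; exact take_eq_of_append hw'
  have hsuf : (e :: m₀ ++ [e₀]) <:+ w'.take N := by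
    rw [htake]; exact ⟨q, by simp⟩
  rw [hge, hge₀]
  rw [PS_iff_of_suffix hsuf (by simp)]
  rw [isPal_cons_concat_iff hp₀ e e₀]
  constructor
  · intro h'; injection h'
  · intro h'; rw [h']

def Tset (w' : List α) (c : Option α) : Set ℕ :=
  {ℓ : ℕ | ∃ u ∈ palSufs w', w'[w'.length - u.length - 1]? = c ∧ u.length = ℓ}

theorem repLen_eq_sInf (w' : List α) (c : Option α) : repLen w' c = sInf (Tset w' c) := rfl

def Lset (w' : List α) : Set ℕ := {R | ∃ c ∈ palSufGroups w', repLen w' c = R}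

noncomputable def rank (L : Set ℕ) (R : ℕ) : ℕ := (L ∩ Set.Iic R).ncard

theorem Tset_mem_iff {w' : List α} {e : α} {R : ℕ} :
    R ∈ Tset w' (some e) ↔ ∃ m, IsPal m ∧ (e :: m) <:+ w' ∧ m.length = R := by
  constructor
  · rintro ⟨u, ⟨hus, hup, hult⟩, hc, rfl⟩
    exact ⟨u, hup, suffix_of_leftchar hus hult hc, rfl⟩
  · rintro ⟨m, hmp, hms, rfl⟩
    have h0 : m <:+ e :: m := ⟨[e], rfl⟩
    have hms' : m <:+ w' := h0.trans hms
    have hlt : m.length < w'.length := by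
      have := hms.length_le; simp at this; omega
    obtain ⟨q, e', hq, he'⟩ := exists_leftchar hms' hlt
    have : e' :: m = e :: m :=
      suffix_eq_of_length_eq ⟨q, hq.symm⟩ hms rfl
    obtain rfl : e' = e := by injection this
    exact ⟨m, ⟨hms', hmp, hlt⟩, he', rfl⟩

theorem Tset_nonempty {w' : List α} {c : Option α} (h : c ∈ palSufGroups w') :
    (Tset w' c).Nonempty := by
  obtain ⟨u, hu, hc⟩ := h
  exact ⟨u.length, u, hu, hc, rfl⟩

theorem repLen_mem {w' : List α} {c : Option α} (h : c ∈ palSufGroups w') :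
    repLen w' c ∈ Tset w' c :=
  Nat.sInf_mem (Tset_nonempty h)

theorem repLen_injOn (w' : List α) : Set.InjOn (repLen w') (palSufGroups w') := by
  intro c₁ h₁ c₂ h₂ heq
  obtain ⟨u₁, hu₁, hc₁, hl₁⟩ := repLen_mem h₁
  obtain ⟨u₂, hu₂, hc₂, hl₂⟩ := repLen_mem h₂
  have : u₁ = u₂ := suffix_eq_of_length_eq hu₁.1 hu₂.1 (by rw [hl₁, hl₂, heq])
  rw [← hc₁, ← hc₂, this]

theorem Lset_eq (w' : List α) :
    Lset w' = {R | R < w'.length ∧ PS w' R ∧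
      ∀ R₀, R₀ < R → PS w' R₀ → ¬ PS (w'.take (w'.length - R + R₀ + 1)) (R₀ + 2)} := by
  ext R
  constructor
  · rintro ⟨c, hc, rfl⟩
    obtain ⟨u, ⟨hus, hup, hult⟩, hcu, hul⟩ := repLen_mem hc
    refine ⟨by omega, ⟨u, hus, hup, hul⟩, ?_⟩
    intro R₀ hR₀ hPS₀ hcontra
    obtain ⟨m₀, hm₀s, hm₀p, hm₀l⟩ := hPS₀
    have hiff := leftchar_eq_iff hus hup hm₀s hm₀p (by omega) hult
    have hcontra' : PS (w'.take (w'.length - u.length + m₀.length + 1)) (m₀.length + 2) := by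
      rw [hul, hm₀l]; exact hcontra
    have hle := hiff.mpr hcontra'
    have hT : R₀ ∈ Tset w' c := by
      refine ⟨m₀, ⟨hm₀s, hm₀p, by omega⟩, ?_, hm₀l⟩
      rw [← hle]; exact hcu
    have := Nat.sInf_le hT
    rw [← repLen_eq_sInf] at this
    omega
  · rintro ⟨hRlt, ⟨u, hus, hup, hul⟩, hmin⟩
    have huPS : u ∈ palSufs w' := ⟨hus, hup, by omega⟩
    set c := w'[w'.length - R - 1]? with hc
    have hcu : w'[w'.length - u.length - 1]? = c := by rw [hul]
    have hcG : c ∈ palSufGroups w' := ⟨u, huPS, hcu⟩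
    refine ⟨c, hcG, ?_⟩
    have hRT : R ∈ Tset w' c := ⟨u, huPS, hcu, hul⟩
    refine le_antisymm (Nat.sInf_le hRT) (le_csInf ⟨R, hRT⟩ ?_)
    rintro R₀ ⟨m₀, ⟨hm₀s, hm₀p, hm₀lt⟩, hcm₀, hm₀l⟩
    by_contra hlt'
    push_neg at hlt'
    have hiff := leftchar_eq_iff hus hup hm₀s hm₀p (by omega) (by omega)
    have hle : w'[w'.length - u.length - 1]? = w'[w'.length - m₀.length - 1]? := by
      rw [hcu, ← hcm₀]
    have := hiff.mp hle
    rw [hul, hm₀l] at this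
    exact hmin R₀ (by omega) ⟨m₀, hm₀s, hm₀p, hm₀l⟩ this

theorem rank_lt_rank {L : Set ℕ} {R₁ R₂ : ℕ} (h₂ : R₂ ∈ L) (h : R₁ < R₂) :
    rank L R₁ < rank L R₂ := by
  apply Set.ncard_lt_ncard
  · constructor
    · exact Set.inter_subset_inter_right L (Set.Iic_subset_Iic.mpr h.le)
    · intro hsub
      have : R₂ ∈ L ∩ Set.Iic R₁ := hsub ⟨h₂, le_refl R₂⟩
      exact absurd this.2 (not_le.mpr h)
  · exact (Set.finite_Iic R₂).subset Set.inter_subset_right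

theorem rank_eq_iff {L : Set ℕ} {R₁ R₂ : ℕ} (h₁ : R₁ ∈ L) (h₂ : R₂ ∈ L) :
    R₁ = R₂ ↔ rank L R₁ = rank L R₂ := by
  constructor
  · rintro rfl; rfl
  · intro h
    rcases lt_trichotomy R₁ R₂ with hlt | he | hlt
    · exact absurd h (rank_lt_rank h₂ hlt).ne
    · exact he
    · exact absurd h.symm (rank_lt_rank h₁ hlt).ne
theorem rank_lt_iff {L : Set ℕ} {R₁ R₂ : ℕ} (h₁ : R₁ ∈ L) (h₂ : R₂ ∈ L) :
    R₁ < R₂ ↔ rank L R₁ < rank L R₂ := by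
  constructor
  · exact rank_lt_rank h₂
  · intro h
    rcases lt_trichotomy R₁ R₂ with hlt | rfl | hlt
    · exact hlt
    · exact absurd h (lt_irrefl _)
    · exact absurd (rank_lt_rank h₁ hlt) (not_lt.mpr h.le)

theorem key {w : List α} {k : ℕ} (hk : 1 ≤ k) (hw : w.length = k) :
    (sspAt w k = ⊤ ∧ sspgAt w k = ⊤) ∨
    (∃ R : ℕ, R ∈ Lset (w.take (k - 1)) ∧ sspAt w k = ((R + 2 : ℕ) : ℕ∞) ∧
      sspgAt w k = (rank (Lset (w.take (k - 1))) R : ℕ∞)) := by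
  by_cases htop : sspAt w k = ⊤
  · exact Or.inl ⟨htop, by rw [sspgAt, if_pos htop]⟩
  · obtain ⟨s, hsspeq, hs2, hPS, hmin⟩ := sspAt_spec htop
    have htk : w.take k = w := by rw [← hw]; exact List.take_length
    obtain ⟨w₁, c, hwc⟩ : ∃ w₁ c, w = w₁ ++ [c] := by
      rcases w.eq_nil_or_concat with rfl | ⟨w₁, c, h'⟩
      · simp at hw; omega
      · exact ⟨w₁, c, by simpa using h'⟩
    have hw₁l : w₁.length = k - 1 := by
      have := congrArg List.length hwc; simp at this; omega
    have hw₁ : w.take (k - 1) = w₁ := by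
      rw [← hw₁l]; exact take_eq_of_append hwc
    rw [htk] at hPS
    obtain ⟨u, hu, hup, hul⟩ := hPS
    obtain ⟨a, m, rfl, hmp⟩ := isPal_decomp hup (by omega)
    have hac : a = c := by
      have h0 : [a] <:+ (a :: m ++ [a]) := ⟨a :: m, by simp⟩
      have h1 : [a] <:+ w := h0.trans hu
      have h2 : [c] <:+ w := ⟨w₁, hwc.symm⟩
      have := suffix_eq_of_length_eq h1 h2 rfl
      injection this
    subst hac
    obtain ⟨p, hp⟩ := hu
    have hpm : p ++ (a :: m) = w₁ := by
      have h3 : (p ++ (a :: m)) ++ [a] = w₁ ++ [a] := by rw [← hwc, ← hp]; simp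
      exact List.append_cancel_right h3
    have hml : m.length = s - 2 := by simp at hul; omega
    set R := m.length with hR
    have hRT : R ∈ Tset w₁ (some a) := Tset_mem_iff.mpr ⟨m, hmp, ⟨p, hpm⟩, rfl⟩
    have hcG : (some a) ∈ palSufGroups w₁ := by
      obtain ⟨u', hu', hcu', _⟩ := hRT
      exact ⟨u', hu', hcu'⟩
    have hrep : repLen w₁ (some a) = R := by
      refine le_antisymm (Nat.sInf_le hRT) (le_csInf ⟨R, hRT⟩ ?_)
      intro R' hR'
      obtain ⟨m₂, hm₂p, hm₂s, hm₂l⟩ := Tset_mem_iff.mp hR'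
      obtain ⟨p₂, hp₂⟩ := hm₂s
      have hPS' : PS (w.take k) (R' + 2) := by
        rw [htk]
        refine ⟨a :: m₂ ++ [a], ⟨p₂, ?_⟩, isPal_cons_concat hm₂p a, by simp [hm₂l]⟩
        rw [hwc, ← hp₂]; simp
      have := hmin (R' + 2) (by omega) hPS'
      omega
    have hsR : s = R + 2 := by omega
    have hLR : R ∈ Lset (w.take (k - 1)) := by
      rw [hw₁]; exact ⟨some a, hcG, hrep⟩
    refine Or.inr ⟨R, hLR, by rw [hsspeq, hsR], ?_⟩
    rw [sspgAt, if_neg htop]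
    have htn : (sspAt w k).toNat - 2 = R := by rw [hsspeq]; simp; omega
    rw [htn, hw₁]
    have hchar : w₁[(k - 1) - R - 1]? = some a := by
      obtain ⟨u', hu', hcu', hul'⟩ := hRT
      rw [← hw₁l, ← hul']
      exact hcu'
    rw [hchar]
    congr 1
    -- groupIdOf w₁ (some a) = rank (Lset w₁) R
    have himg : repLen w₁ '' {c' | c' ∈ palSufGroups w₁ ∧ repLen w₁ c' ≤ repLen w₁ (some a)}
        = Lset w₁ ∩ Set.Iic R := by
      ext R'
      constructor
      · rintro ⟨c', ⟨hc', hle⟩, rfl⟩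
        exact ⟨⟨c', hc', rfl⟩, by rw [hrep] at hle; exact hle⟩
      · rintro ⟨⟨c', hc', rfl⟩, hle⟩
        exact ⟨c', ⟨hc', by rw [hrep]; exact hle⟩, rfl⟩
    have := Set.ncard_image_of_injOn
      (s := {c' | c' ∈ palSufGroups w₁ ∧ repLen w₁ c' ≤ repLen w₁ (some a)})
      (f := repLen w₁)
      ((repLen_injOn w₁).mono (fun c' hc' => hc'.1))
    rw [himg] at this
    rw [groupIdOf, rank, ← this]

end Aux

/-- For strings `x, y` of length `k` whose ssp-encodings agree on the first `k-1`
positions: `ssp_x[k] = ssp_y[k]` iff `sspg_x[k] = sspg_y[k]`, and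
`ssp_x[k] < ssp_y[k]` iff `sspg_x[k] < sspg_y[k]`. -/
theorem stmt3 {α : Type*} (x y : List α) (k : ℕ) (hk : 1 ≤ k)
    (hx : x.length = k) (hy : y.length = k)
    (h : (ssp x).take (k - 1) = (ssp y).take (k - 1)) :
    (sspAt x k = sspAt y k ↔ sspgAt x k = sspgAt y k) ∧
    (sspAt x k < sspAt y k ↔ sspgAt x k < sspgAt y k) := by
  classical
  have hk1 : k - 1 ≤ k := Nat.sub_le k 1
  -- pointwise equality of ssp values on the first k-1 positions
  have hssp : ∀ i, 1 ≤ i → i ≤ k - 1 → sspAt x i = sspAt y i := by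
    intro i h1 h2
    have hxg : ((ssp x).take (k - 1))[i - 1]? = some (sspAt x i) := by
      rw [List.getElem?_take, if_pos (by omega : i - 1 < k - 1), ssp,
        List.getElem?_map, List.getElem?_range (by rw [hx]; omega)]
      simp only [Option.map_some]
      rw [show i - 1 + 1 = i by omega]
    have hyg : ((ssp y).take (k - 1))[i - 1]? = some (sspAt y i) := by
      rw [List.getElem?_take, if_pos (by omega : i - 1 < k - 1), ssp,
        List.getElem?_map, List.getElem?_range (by rw [hy]; omega)]
      simp only [Option.map_some]
      rw [show i - 1 + 1 = i by omega]
    rw [h, hyg] at hxg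
    injection hxg with hh
    exact hh.symm
  have hpm := Aux.palmatch (x := x) (y := y) (n := k - 1) (by omega) (by omega) hssp
  -- the sets of group-representative lengths coincide
  have hLeq : Aux.Lset (x.take (k - 1)) = Aux.Lset (y.take (k - 1)) := by
    have hlx : (x.take (k - 1)).length = k - 1 := by simp; omega
    have hly : (y.take (k - 1)).length = k - 1 := by simp; omega
    rw [Aux.Lset_eq, Aux.Lset_eq]
    ext R
    constructor
    · rintro ⟨h1, h2, h3⟩
      rw [hlx] at h1 h3
      refine ⟨by omega, (hpm (k - 1) (le_refl _) R).mp h2, ?_⟩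
      rw [hly]
      intro R₀ hR₀ hPS₀ hcon
      refine h3 R₀ hR₀ ((hpm (k - 1) (le_refl _) R₀).mpr hPS₀) ?_
      have hxt : (x.take (k - 1)).take (k - 1 - R + R₀ + 1) = x.take (k - 1 - R + R₀ + 1) := by
        rw [List.take_take]
        congr 1
        omega
      have hyt : (y.take (k - 1)).take (k - 1 - R + R₀ + 1) = y.take (k - 1 - R + R₀ + 1) := by
        rw [List.take_take]
        congr 1
        omega
      rw [hyt] at hcon
      rw [hxt]
      exact (hpm (k - 1 - R + R₀ + 1) (by omega) (R₀ + 2)).mpr hcon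
    · rintro ⟨h1, h2, h3⟩
      rw [hly] at h1 h3
      refine ⟨by omega, (hpm (k - 1) (le_refl _) R).mpr h2, ?_⟩
      rw [hlx]
      intro R₀ hR₀ hPS₀ hcon
      refine h3 R₀ hR₀ ((hpm (k - 1) (le_refl _) R₀).mp hPS₀) ?_
      have hxt : (x.take (k - 1)).take (k - 1 - R + R₀ + 1) = x.take (k - 1 - R + R₀ + 1) := by
        rw [List.take_take]
        congr 1
        omega
      have hyt : (y.take (k - 1)).take (k - 1 - R + R₀ + 1) = y.take (k - 1 - R + R₀ + 1) := by
        rw [List.take_take]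
        congr 1
        omega
      rw [hxt] at hcon
      rw [hyt]
      exact (hpm (k - 1 - R + R₀ + 1) (by omega) (R₀ + 2)).mp hcon
  rcases Aux.key hk hx with ⟨hx1, hx2⟩ | ⟨Rx, hRxL, hx1, hx2⟩ <;>
    rcases Aux.key hk hy with ⟨hy1, hy2⟩ | ⟨Ry, hRyL, hy1, hy2⟩
  · rw [hx1, hy1, hx2, hy2]
    exact ⟨Iff.rfl, Iff.rfl⟩
  · refine ⟨iff_of_false ?_ ?_, iff_of_false ?_ ?_⟩
    · rw [hx1, hy1]; exact ENat.top_ne_coe _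
    · rw [hx2, hy2]; exact ENat.top_ne_coe _
    · rw [hx1]; simp
    · rw [hx2]; simp
  · refine ⟨iff_of_false ?_ ?_, iff_of_true ?_ ?_⟩
    · rw [hx1, hy1]; exact ENat.coe_ne_top _
    · rw [hx2, hy2]; exact ENat.coe_ne_top _
    · rw [hx1, hy1]; exact ENat.coe_lt_top _
    · rw [hx2, hy2]; exact ENat.coe_lt_top _
  · rw [hLeq] at hRxL hx2
    have h1 : Rx = Ry ↔ Aux.rank (Aux.Lset (y.take (k - 1))) Rx
        = Aux.rank (Aux.Lset (y.take (k - 1))) Ry := Aux.rank_eq_iff hRxL hRyL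
    have h2 : Rx < Ry ↔ Aux.rank (Aux.Lset (y.take (k - 1))) Rx
        < Aux.rank (Aux.Lset (y.take (k - 1))) Ry := Aux.rank_lt_iff hRxL hRyL
    constructor
    · rw [hx1, hy1, hx2, hy2, Nat.cast_inj, Nat.cast_inj]
      rw [← h1]
      omega
    · rw [hx1, hy1, hx2, hy2, Nat.cast_lt, Nat.cast_lt]
      rw [← h2]
      omega
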